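/- Locality of the support (Theorem 1(iv)–(v)): suppose ε > 0 and the initial charge is concentrated at a single vertex i0. Then for every time t and every vertex i with x_i^t > 0, either i = i0 or there exist a time s < t and a vertex j adjacent to i in G with x_j^s > ε. In particular every vertex that is neither i0 nor a neighbor of a vertex that has been a core vertex has zero charge at all times. -/
import Mathlib


/-- **Locality of the support (Theorem 1(iv)–(v)).** Suppose `ε > 0` and the initial charge
is concentrated at a single vertex `i0`. Then any vertex carrying positive charge at time `t`
is either `i0` itself, or is adjacent to some vertex that was a core vertex at some earlier
time `s < t`. -/
theorem support_locality
    {V : Type*} [Fintype V] [DecidableEq V]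
    (G : SimpleGraph V) [DecidableRel G.Adj]
    (hdeg : ∀ i : V, 0 < G.degree i)
    (ε : ℝ) (x : ℕ → V → ℝ)
    (hupd : ∀ (t : ℕ) (i : V),
      x (t + 1) i =
        (ε + (x t i - ε) / 2) * (if ε < x t i then (1 : ℝ) else 0)
          + x t i * (1 - (if ε < x t i then (1 : ℝ) else 0))
          + (1 / 2) * ∑ j ∈ G.neighborFinset i,
              (if ε < x t j then (1 : ℝ) else 0) * (x t j - ε) / (G.degree j))
    (hε : 0 < ε)
    (i0 : V) (hinit : x 0 i0 = 1) (hinit' : ∀ i : V, i ≠ i0 → x 0 i = 0) :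
    ∀ (t : ℕ) (i : V), 0 < x t i →
      i = i0 ∨ ∃ s < t, ∃ j : V, G.Adj i j ∧ ε < x s j := by
  intro t
  induction t with
  | zero =>
    intro i hi
    left
    by_contra h
    rw [hinit' i h] at hi
    exact lt_irrefl 0 hi
  | succ t ih =>
    intro i hi
    rw [hupd t i] at hi
    by_cases hpos : 0 < x t i
    · rcases ih i hpos with h | ⟨s, hs, j, hj, hxj⟩
      · exact Or.inl h
      · exact Or.inr ⟨s, hs.trans (Nat.lt_succ_self t), j, hj, hxj⟩
    · have hz : ¬ ε < x t i := fun h => hpos (hε.trans h)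
      rw [if_neg hz] at hi
      right
      by_contra hcon
      push_neg at hcon
      have hsum : ∑ j ∈ G.neighborFinset i,
          (if ε < x t j then (1:ℝ) else 0) * (x t j - ε) / (G.degree j) = 0 := by
        apply Finset.sum_eq_zero
        intro j hj
        rw [if_neg (not_lt.mpr (hcon t (Nat.lt_succ_self t) j ((G.mem_neighborFinset i j).mp hj)))]
        ring
      rw [hsum] at hi
      push_neg at hpos
      nlinarith
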